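/- For every real α with 0 < α ≤ 1/2 there exist a constant C > 0 and an integer K such that for all integers k ≥ K and n ≥ 4·k⁶, there exists an (n,k,α)-universal set of size at most (1/α)^k · k^{C·k^{5/6}} · log n. -/

import Mathlib

open Finset

lemma aux_I1 (m s : ℕ) : (m + 1).choose (s + 1) * (s + 1) = (m + 1) * m.choose s :=
  (Nat.add_one_mul_choose_eq m s).symm

lemma aux_I2 (m t : ℕ) (ht : t ≤ m) :
    (m + 1).choose t * (m + 1 - t) = (m + 1) * m.choose t := by
  have h1 : (m + 1).choose t = (m + 1).choose (m + 1 - t) := (Nat.choose_symm (by omega)).symm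
  have h2 : m + 1 - t = (m - t) + 1 := by omega
  have h3 : m - (m - t) = t := by omega
  rw [h1, h2, aux_I1 m (m - t), ← h3, Nat.choose_symm (by omega : m - t ≤ m), h3]

lemma aux_ratio : ∀ (a b n t : ℕ), a ≤ t → t + b ≤ n →
    n.choose t * (t - (a + b)) ^ a * ((n - t) - (a + b)) ^ b ≤
      n ^ (a + b) * (n - (a + b)).choose (t - a) := by
  intro a
  induction a with
  | zero =>
    intro b
    induction b with
    | zero => intro n t _ _; simp
    | succ b ih =>
      intro n t _ hbn
      obtain ⟨m, rfl⟩ : ∃ m, n = m + 1 := ⟨n - 1, by omega⟩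
      have ihm := ih m t (by omega) (by omega)
      simp only [zero_add, pow_zero, mul_one, one_mul, Nat.sub_zero] at ihm ⊢
      have hstep : (m + 1 - t - (b + 1)) ^ (b + 1) ≤ (m + 1 - t) * (m - t - b) ^ b := by
        have h2 : m + 1 - t - (b + 1) = m - t - b := by omega
        rw [pow_succ', h2]
        exact Nat.mul_le_mul_right _ (by omega)
      calc (m + 1).choose t * (m + 1 - t - (b + 1)) ^ (b + 1)
          ≤ (m + 1).choose t * ((m + 1 - t) * (m - t - b) ^ b) :=
            Nat.mul_le_mul_left _ hstep
        _ = ((m + 1).choose t * (m + 1 - t)) * (m - t - b) ^ b := by ring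
        _ = (m + 1) * (m.choose t * (m - t - b) ^ b) := by
            rw [aux_I2 m t (by omega)]; ring
        _ ≤ (m + 1) * (m ^ b * (m - b).choose t) := Nat.mul_le_mul_left _ ihm
        _ ≤ (m + 1) ^ (b + 1) * ((m + 1 - (b + 1)).choose t) := by
            have he : m - b = m + 1 - (b + 1) := by omega
            rw [← he, pow_succ']
            calc (m+1) * (m ^ b * (m - b).choose t)
                ≤ (m+1) * ((m+1) ^ b * (m - b).choose t) :=
                  Nat.mul_le_mul_left _
                    (Nat.mul_le_mul_right _ (Nat.pow_le_pow_left (by omega) b))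
              _ = (m + 1) * (m + 1) ^ b * (m - b).choose t := by ring
  | succ a iha =>
    intro b n t hat htn
    obtain ⟨m, rfl⟩ : ∃ m, n = m + 1 := ⟨n - 1, by omega⟩
    obtain ⟨s, rfl⟩ : ∃ s, t = s + 1 := ⟨t - 1, by omega⟩
    have ihm := iha b m s (by omega) (by omega)
    have e1 : s + 1 - (a + 1 + b) = s - (a + b) := by omega
    have e2 : m + 1 - (s + 1) = m - s := by omega
    have e3 : m + 1 - (a + 1 + b) = m - (a + b) := by omega
    have e4 : s + 1 - (a + 1) = s - a := by omega
    rw [e1, e2, e3, e4]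
    have hstep : (s - (a + b)) ^ (a + 1) ≤ (s + 1) * (s - (a + b)) ^ a := by
      rw [pow_succ']
      exact Nat.mul_le_mul_right _ (by omega)
    calc (m + 1).choose (s + 1) * (s - (a + b)) ^ (a + 1) * (m - s - (a + 1 + b)) ^ b
        ≤ (m + 1).choose (s + 1) * ((s + 1) * (s - (a + b)) ^ a) * (m - s - (a + b)) ^ b :=
          Nat.mul_le_mul (Nat.mul_le_mul_left _ hstep)
            (Nat.pow_le_pow_left (by omega) b)
      _ = ((m + 1).choose (s + 1) * (s + 1)) * ((s - (a + b)) ^ a * (m - s - (a + b)) ^ b) := by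
          ring
      _ = (m + 1) * (m.choose s * (s - (a + b)) ^ a * (m - s - (a + b)) ^ b) := by
          rw [aux_I1]; ring
      _ ≤ (m + 1) * (m ^ (a + b) * (m - (a + b)).choose (s - a)) := Nat.mul_le_mul_left _ ihm
      _ ≤ (m + 1) ^ (a + 1 + b) * (m - (a + b)).choose (s - a) := by
          have h2 : a + 1 + b = (a + b) + 1 := by omega
          rw [h2, pow_succ']
          calc (m+1) * (m ^ (a+b) * (m - (a + b)).choose (s - a))
              ≤ (m+1) * ((m+1) ^ (a+b) * (m - (a + b)).choose (s - a)) :=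
                Nat.mul_le_mul_left _
                  (Nat.mul_le_mul_right _ (Nat.pow_le_pow_left (by omega) _))
            _ = (m + 1) * (m + 1) ^ (a+b) * (m - (a + b)).choose (s - a) := by ring

lemma aux_count (n t : ℕ) (S₀ S₁ : Finset (Fin n)) (hd : Disjoint S₀ S₁)
    (hat : S₁.card ≤ t) :
    (((univ : Finset (Fin n)).powersetCard t).filter
        (fun R => S₁ ⊆ R ∧ Disjoint S₀ R)).card
      = (n - (S₀.card + S₁.card)).choose (t - S₁.card) := by
  have hcompl : ((univ : Finset (Fin n)) \ (S₀ ∪ S₁)).card = n - (S₀.card + S₁.card) := by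
    rw [card_sdiff_of_subset (subset_univ _), card_univ, Fintype.card_fin,
      card_union_of_disjoint hd]
  rw [← hcompl, ← card_powersetCard]
  apply card_bij' (fun R _ => R \ S₁) (fun Q _ => Q ∪ S₁)
  · intro R hR
    simp only [mem_filter, mem_powersetCard_univ] at hR
    obtain ⟨hRt, hS₁R, hS₀R⟩ := hR
    rw [mem_powersetCard]
    constructor
    · intro x hx
      simp only [mem_sdiff] at hx ⊢
      refine ⟨mem_univ x, ?_⟩
      simp only [mem_union]
      push_neg
      exact ⟨fun h => disjoint_left.1 hS₀R h hx.1, hx.2⟩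
    · rw [card_sdiff_of_subset hS₁R, hRt]
  · intro Q hQ
    rw [mem_powersetCard] at hQ
    obtain ⟨hQsub, hQcard⟩ := hQ
    have hQS₁ : Disjoint Q S₁ := by
      refine disjoint_left.2 fun x hx hx1 => ?_
      have := hQsub hx
      simp only [mem_sdiff, mem_union] at this
      exact this.2 (Or.inr hx1)
    have hQS₀ : Disjoint S₀ Q := by
      refine disjoint_left.2 fun x hx0 hx => ?_
      have := hQsub hx
      simp only [mem_sdiff, mem_union] at this
      exact this.2 (Or.inl hx0)
    simp only [mem_filter, mem_powersetCard_univ]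
    refine ⟨?_, subset_union_right, ?_⟩
    · rw [card_union_of_disjoint hQS₁, hQcard]
      omega
    · rw [disjoint_union_right]
      exact ⟨hQS₀, hd⟩
  · intro R hR
    simp only [mem_filter] at hR
    exact sdiff_union_of_subset hR.2.1
  · intro Q hQ
    rw [mem_powersetCard] at hQ
    have hQS₁ : Disjoint Q S₁ := by
      refine disjoint_left.2 fun x hx hx1 => ?_
      have := hQ.1 hx
      simp only [mem_sdiff, mem_union] at this
      exact this.2 (Or.inr hx1)
    exact union_sdiff_cancel_right hQS₁

lemma aux_exists {β ι : Type*} [DecidableEq β] (m : ℕ) (𝒯 : Finset β) (P : Finset ι)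
    (Good : ι → β → Prop) [∀ p R, Decidable (Good p R)]
    (hsum : ∑ p ∈ P, ((𝒯.filter fun R => ¬ Good p R).card) ^ m < 𝒯.card ^ m) :
    ∃ g : Fin m → β, (∀ i, g i ∈ 𝒯) ∧ ∀ p ∈ P, ∃ i, Good p (g i) := by
  classical
  by_contra hcon
  push_neg at hcon
  have hsub : Fintype.piFinset (fun _ : Fin m => 𝒯) ⊆
      P.biUnion (fun p => Fintype.piFinset
        (fun _ : Fin m => 𝒯.filter fun R => ¬ Good p R)) := by
    intro g hg
    rw [Fintype.mem_piFinset] at hg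
    obtain ⟨p, hp, hgood⟩ := hcon g hg
    rw [mem_biUnion]
    refine ⟨p, hp, ?_⟩
    rw [Fintype.mem_piFinset]
    intro i
    rw [mem_filter]
    exact ⟨hg i, hgood i⟩
  have h1 := (card_le_card hsub).trans card_biUnion_le
  rw [Fintype.card_piFinset] at h1
  simp only [Fintype.card_piFinset, prod_const, card_univ, Fintype.card_fin] at h1
  omega

def GoodPair {n : ℕ} (p : Finset (Fin n) × Finset (Fin n)) (R : Finset (Fin n)) : Prop :=
  p.2 ⊆ R ∧ Disjoint p.1 R

instance {n : ℕ} (p : Finset (Fin n) × Finset (Fin n)) (R : Finset (Fin n)) :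
    Decidable (GoodPair p R) := by unfold GoodPair; infer_instance

set_option maxHeartbeats 1600000 in
lemma aux_key (α : ℝ) (hα0 : 0 < α) (hα1 : α ≤ 1 / 2) (k n t : ℕ)
    (hk1R : (1:ℝ) ≤ k) (hk10R : (10:ℝ) ≤ k)
    (hαk1 : 1 ≤ α * k) (hn4 : 4 * (k:ℝ)^6 ≤ n)
    (ht1 : α * n ≤ t) (ht2 : (t:ℝ) ≤ α * n + 1)
    (hkt : k ≤ t) (htkn : t + k ≤ n)
    (S₀ S₁ : Finset (Fin n)) (hd : Disjoint S₀ S₁) (hcard : S₀.card + S₁.card = k) :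
    α^k / 2 * (n.choose t : ℝ) ≤
      ((((univ : Finset (Fin n)).powersetCard t).filter (GoodPair (S₀, S₁))).card : ℝ) := by
  have hα1' : α ≤ 1 - α := by linarith
  have hα1'' : (0:ℝ) < 1 - α := by linarith
  have hk0R : (0:ℝ) < k := by linarith
  have hkne : (k:ℝ) ≠ 0 := by linarith
  have hn0 : (0:ℝ) < n := by
    have h6 : (0:ℝ) < (k:ℝ)^6 := by positivity
    linarith
  have hk12 : (k:ℝ) ≤ (k:ℝ)^2 := by nlinarith
  have hk25 : (k:ℝ)^2 ≤ (k:ℝ)^5 := pow_le_pow_right₀ hk1R (by norm_num)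
  have hαn : 4 * (k:ℝ)^5 ≤ α * n := by
    have h1 : α * (4 * (k:ℝ)^6) ≤ α * n := mul_le_mul_of_nonneg_left hn4 hα0.le
    calc 4 * (k:ℝ)^5 = 1 * (4 * (k:ℝ)^5) := by ring
      _ ≤ (α * k) * (4 * (k:ℝ)^5) := by
          apply mul_le_mul_of_nonneg_right hαk1 (by positivity)
      _ = α * (4 * (k:ℝ)^6) := by ring
      _ ≤ α * n := h1
  set a := S₁.card with ha_def
  set b := S₀.card with hb_def
  have hab : a + b = k := by omega
  have hat : a ≤ t := by omega
  have hcount : ((((univ : Finset (Fin n)).powersetCard t).filter (GoodPair (S₀, S₁))).card)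
      = (n - k).choose (t - a) := by
    have h := aux_count n t S₀ S₁ hd hat
    have he : S₀.card + S₁.card = k := hcard
    calc ((((univ : Finset (Fin n)).powersetCard t).filter (GoodPair (S₀, S₁))).card)
        = (((univ : Finset (Fin n)).powersetCard t).filter
            (fun R => S₁ ⊆ R ∧ Disjoint S₀ R)).card := by
          apply congrArg
          apply filter_congr_decidable
      _ = (n - (S₀.card + S₁.card)).choose (t - S₁.card) := h
      _ = (n - k).choose (t - a) := by rw [he]
  rw [hcount]
  have hratio := aux_ratio a b n t hat (by omega)
  rw [hab] at hratio
  have hratioR : ((n.choose t : ℕ):ℝ) * ((t - k : ℕ):ℝ) ^ a * (((n - t) - k : ℕ):ℝ) ^ b ≤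
      (n:ℝ)^k * ((n - k).choose (t - a) : ℝ) := by exact_mod_cast hratio
  have hc1 : ((t - k : ℕ):ℝ) = (t:ℝ) - k := by rw [Nat.cast_sub hkt]
  have hc2 : (((n - t) - k : ℕ):ℝ) = (n:ℝ) - t - k := by
    rw [Nat.cast_sub (by omega : k ≤ n - t), Nat.cast_sub (by omega : t ≤ n)]
  rw [hc1, hc2] at hratioR
  have hprod : α^k / 2 * (n:ℝ)^k ≤ ((t:ℝ) - k) ^ a * ((n:ℝ) - t - k) ^ b := by
    set ε : ℝ := 1 - 1/(4*k) with hε_def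
    have hε0 : 0 ≤ ε := by
      rw [hε_def]
      have : 1/(4*(k:ℝ)) ≤ 1 := by
        rw [div_le_one (by positivity)]; linarith
      linarith
    have hX : α * n * ε ≤ (t:ℝ) - k := by
      have h4k2 : 4 * (k:ℝ)^2 ≤ α * n := by
        have : 4*(k:ℝ)^2 ≤ 4*(k:ℝ)^5 := by linarith
        linarith
      have he : α * n * ε = α * n - (α * n) / (4*k) := by
        rw [hε_def]; field_simp
      rw [he]
      have : (k:ℝ) ≤ (α * n) / (4*k) := by
        rw [le_div_iff₀ (by positivity)]
        nlinarith
      linarith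
    have hY : (1-α) * n * ε ≤ (n:ℝ) - t - k := by
      have hk4 : (10:ℝ)^4 ≤ (k:ℝ)^4 := pow_le_pow_left₀ (by norm_num) hk10R 4
      have hk62 : 10000 * (k:ℝ)^2 ≤ (k:ℝ)^6 := by
        calc 10000 * (k:ℝ)^2 = (k:ℝ)^2 * 10^4 := by ring
          _ ≤ (k:ℝ)^2 * (k:ℝ)^4 := mul_le_mul_of_nonneg_left hk4 (sq_nonneg (k:ℝ))
          _ = (k:ℝ)^6 := by ring
      have h8k : 8 * (k:ℝ) * (k+1) ≤ n := by nlinarith [hk62, hn4, hk12]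
      have he : (1-α) * n * ε = (1-α) * n - ((1-α) * n) / (4*k) := by
        rw [hε_def]; field_simp
      rw [he]
      have h2 : (k:ℝ) + 1 ≤ ((1-α) * n) / (4*k) := by
        rw [le_div_iff₀ (by positivity)]
        have hhalf : (1/2:ℝ) * n ≤ (1-α) * n := by
          apply mul_le_mul_of_nonneg_right (by linarith) hn0.le
        nlinarith [hk62, hn4, hk12, hhalf]
      linarith
    have hX0 : 0 ≤ α * n * ε := by positivity
    have hY0 : 0 ≤ (1-α) * n * ε := by positivity
    have hXa : (α * n * ε)^a ≤ ((t:ℝ) - k)^a := pow_le_pow_left₀ hX0 hX a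
    have hYb : ((1-α) * n * ε)^b ≤ ((n:ℝ) - t - k)^b := pow_le_pow_left₀ hY0 hY b
    have hEps : (3/4 : ℝ) ≤ ε ^ k := by
      have hble : 1/(4*(k:ℝ)) ≤ 1 := by
        rw [div_le_one (by positivity)]; linarith
      have hb := one_add_mul_le_pow (a := -(1/(4*(k:ℝ)))) (by
        have : 0 < 1/(4*(k:ℝ)) := by positivity
        linarith) k
      have hq : (k:ℝ) * (1/(4*k)) = 1/4 := by field_simp
      have h1 : (1:ℝ) + k * (-(1/(4*k))) = 3/4 := by
        rw [mul_neg, hq]; norm_num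
      have h2 : (1:ℝ) + (-(1/(4*k))) = ε := by rw [hε_def]; ring
      rw [h1, h2] at hb
      exact hb
    calc α^k / 2 * (n:ℝ)^k ≤ (α^k * (3/4)) * (n:ℝ)^k := by
          apply mul_le_mul_of_nonneg_right _ (by positivity)
          nlinarith [pow_nonneg hα0.le k]
      _ ≤ (α^a * (1-α)^b) * ((n:ℝ)^k * ε^k) := by
          have hαab : α^k ≤ α^a * (1-α)^b := by
            calc α^k = α^a * α^b := by rw [← pow_add, hab]
              _ ≤ α^a * (1-α)^b :=
                  mul_le_mul_of_nonneg_left (pow_le_pow_left₀ hα0.le hα1' b) (by positivity)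
          calc (α^k * (3/4)) * (n:ℝ)^k ≤ (α^a * (1-α)^b * (3/4)) * (n:ℝ)^k := by
                apply mul_le_mul_of_nonneg_right _ (by positivity)
                exact mul_le_mul_of_nonneg_right hαab (by norm_num)
            _ ≤ (α^a * (1-α)^b * ε^k) * (n:ℝ)^k := by
                apply mul_le_mul_of_nonneg_right _ (by positivity)
                exact mul_le_mul_of_nonneg_left hEps (by positivity)
            _ = (α^a * (1-α)^b) * ((n:ℝ)^k * ε^k) := by ring
      _ = (α * n * ε)^a * ((1-α) * n * ε)^b := by
          have hn' : (n:ℝ)^k = (n:ℝ)^a * (n:ℝ)^b := by rw [← pow_add, hab]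
          have hε' : ε^k = ε^a * ε^b := by rw [← pow_add, hab]
          rw [hn', hε', mul_pow, mul_pow, mul_pow, mul_pow]; ring
      _ ≤ ((t:ℝ) - k)^a * ((n:ℝ) - t - k)^b :=
          mul_le_mul hXa hYb (pow_nonneg hY0 b) (pow_nonneg (hX0.trans hX) a)
  have hnk0 : (0:ℝ) < (n:ℝ)^k := by positivity
  apply le_of_mul_le_mul_right _ hnk0
  calc α^k / 2 * (n.choose t : ℝ) * (n:ℝ)^k
      = (n.choose t : ℝ) * (α^k / 2 * (n:ℝ)^k) := by ring
    _ ≤ (n.choose t : ℝ) * (((t:ℝ) - k)^a * ((n:ℝ) - t - k)^b) :=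
        mul_le_mul_of_nonneg_left hprod (by positivity)
    _ = (n.choose t : ℝ) * ((t:ℝ) - k)^a * ((n:ℝ) - t - k)^b := by ring
    _ ≤ (n:ℝ)^k * ((n - k).choose (t - a) : ℝ) := hratioR
    _ = ((n - k).choose (t - a) : ℝ) * (n:ℝ)^k := by ring

/-- An `(n,k,α)`-universal set: every function maps exactly `⌈α·n⌉` elements to `1`,
and for all disjoint `S₀, S₁ ⊆ [n]` with `|S₀| + |S₁| = k` some function maps all of
`S₀` to `0` and all of `S₁` to `1`. -/
def IsUniversalSet (n k : ℕ) (α : ℝ) (F : Finset (Fin n → Fin 2)) : Prop :=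
  (∀ f ∈ F, (Finset.univ.filter fun x => f x = 1).card = ⌈α * (n : ℝ)⌉₊) ∧
  ∀ S₀ S₁ : Finset (Fin n), Disjoint S₀ S₁ → S₀.card + S₁.card = k →
    ∃ f ∈ F, (∀ x ∈ S₀, f x = 0) ∧ ∀ x ∈ S₁, f x = 1

lemma aux_union {ι : Type*} (q : ℝ) (N m : ℕ) (hN0 : 0 < N) (hq1 : q ≤ 1)
    (S : Finset ι) (f : ι → ℕ) (hf : ∀ p ∈ S, (f p : ℝ) ≤ (1 - q) * N)
    (hP : (S.card : ℝ) * (1 - q) ^ m < 1) :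
    ∑ p ∈ S, (f p) ^ m < N ^ m := by
  have hN0R : (0:ℝ) < N := by exact_mod_cast hN0
  have h1q0 : (0:ℝ) ≤ 1 - q := by linarith
  have hsumR : (∑ p ∈ S, ((f p : ℝ)) ^ m) < (N:ℝ) ^ m := by
    calc (∑ p ∈ S, ((f p : ℝ)) ^ m) ≤ S.card • (((1 - q) * N) ^ m) := by
          apply sum_le_card_nsmul
          intro p hp
          exact pow_le_pow_left₀ (by positivity) (hf p hp) m
      _ = (S.card : ℝ) * ((1 - q) * N) ^ m := by rw [nsmul_eq_mul]
      _ = ((S.card : ℝ) * (1 - q) ^ m) * (N:ℝ) ^ m := by rw [mul_pow]; ring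
      _ < 1 * (N:ℝ) ^ m := mul_lt_mul_of_pos_right hP (by positivity)
      _ = (N:ℝ) ^ m := by ring
  exact_mod_cast hsumR

set_option maxHeartbeats 2000000 in
/-- For every `0 < α ≤ 1/2` there are `C > 0` and `K` such that for all `k ≥ K` and
`n ≥ 4·k⁶`, there is an `(n,k,α)`-universal set of size at most
`(1/α)^k · k^{C·k^{5/6}} · log n`. -/
theorem uniform_universal_set (α : ℝ) (hα0 : 0 < α) (hα1 : α ≤ 1 / 2) :
    ∃ C : ℝ, 0 < C ∧ ∃ K : ℕ, ∀ k : ℕ, K ≤ k → ∀ n : ℕ, 4 * k ^ 6 ≤ n →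
      ∃ F : Finset (Fin n → Fin 2),
        IsUniversalSet n k α F ∧
          (F.card : ℝ) ≤
            (1 / α) ^ k * (k : ℝ) ^ (C * (k : ℝ) ^ ((5 : ℝ) / 6)) *
              Real.logb 2 n := by
  classical
  refine ⟨3, by norm_num, ⌈1/α⌉₊ + 10, fun k hk n hn => ?_⟩
  have hk10 : 10 ≤ k := by omega
  have hk1R : (1:ℝ) ≤ k := by exact_mod_cast Nat.one_le_iff_ne_zero.2 (by omega)
  have hk10R : (10:ℝ) ≤ k := by exact_mod_cast hk10
  have hk0R : (0:ℝ) < k := by linarith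
  have hkα : 1/α ≤ (k : ℝ) := by
    have h1 : (1/α : ℝ) ≤ ⌈(1/α : ℝ)⌉₊ := Nat.le_ceil _
    have h2 : (⌈(1/α : ℝ)⌉₊ : ℝ) ≤ k := by exact_mod_cast le_trans (Nat.le_add_right _ 10) hk
    linarith
  have hαk1 : 1 ≤ α * k := by
    rw [div_le_iff₀ hα0] at hkα
    linarith [hkα]
  have hn4 : 4 * (k:ℝ)^6 ≤ n := by exact_mod_cast hn
  have hn0 : (0:ℝ) < n := by
    have h6 : (0:ℝ) < (k:ℝ)^6 := by positivity
    linarith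
  have hα1'' : (0:ℝ) < 1 - α := by linarith
  set t := ⌈α * (n:ℝ)⌉₊ with ht_def
  have ht1 : α * n ≤ t := Nat.le_ceil _
  have ht2 : (t:ℝ) ≤ α * n + 1 := le_of_lt (Nat.ceil_lt_add_one (by positivity))
  have hk5 : (k:ℝ) ≤ (k:ℝ)^5 := le_self_pow₀ hk1R (by norm_num)
  have hk6 : (k:ℝ) ≤ (k:ℝ)^6 := le_self_pow₀ hk1R (by norm_num)
  have hαn : 4 * (k:ℝ)^5 ≤ α * n := by
    have h1 : α * (4 * (k:ℝ)^6) ≤ α * n := mul_le_mul_of_nonneg_left hn4 hα0.le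
    calc 4 * (k:ℝ)^5 = 1 * (4 * (k:ℝ)^5) := by ring
      _ ≤ (α * k) * (4 * (k:ℝ)^5) := mul_le_mul_of_nonneg_right hαk1 (by positivity)
      _ = α * (4 * (k:ℝ)^6) := by ring
      _ ≤ α * n := h1
  have hkt : k ≤ t := by
    have : (k:ℝ) ≤ t := by linarith
    exact_mod_cast this
  have htkn : t + k ≤ n := by
    have h1 : (t:ℝ) + k ≤ n := by nlinarith [hn4, hk6, ht2, hα1'', hn0]
    exact_mod_cast h1
  have htn : t ≤ n := by omega
  set N := n.choose t with hN_def
  have hN0 : 0 < N := Nat.choose_pos htn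
  have hN0R : (0:ℝ) < N := by exact_mod_cast hN0
  set q : ℝ := α^k / 2 with hq_def
  have hq0 : 0 < q := by positivity
  have hαk_le : α^k ≤ 1 := pow_le_one₀ hα0.le (by linarith)
  have hq1 : q ≤ 1/2 := by rw [hq_def]; linarith
  set L := Real.logb 2 n with hL_def
  have hL2 : (2:ℝ) ≤ L := by
    rw [hL_def, Real.le_logb_iff_rpow_le (by norm_num) hn0]
    have h4 : ((2:ℝ))^((2:ℝ)) = 4 := by
      rw [show ((2:ℝ)) = ((2:ℕ):ℝ) by norm_num, Real.rpow_natCast]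
      norm_num
    rw [h4]
    nlinarith [hk6, hk1R]
  have hTcard : ((univ : Finset (Fin n)).powersetCard t).card = N := by
    rw [card_powersetCard, card_univ, Fintype.card_fin]
  set P : Finset (Finset (Fin n) × Finset (Fin n)) :=
    ((univ : Finset (Fin n)).powersetCard k).biUnion
      (fun S => S.powerset.image (fun S₁ => (S \ S₁, S₁))) with hP_def
  have hPmem : ∀ S₀ S₁ : Finset (Fin n), Disjoint S₀ S₁ → S₀.card + S₁.card = k →
      (S₀, S₁) ∈ P := by
    intro S₀ S₁ hd hcard
    rw [hP_def, mem_biUnion]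
    refine ⟨S₀ ∪ S₁, ?_, ?_⟩
    · rw [mem_powersetCard_univ, card_union_of_disjoint hd, hcard]
    · rw [mem_image]
      exact ⟨S₁, mem_powerset.2 subset_union_right, by rw [union_sdiff_cancel_right hd]⟩
  have hPcard : P.card ≤ n^k * 2^k := by
    calc P.card ≤ ∑ S ∈ (univ : Finset (Fin n)).powersetCard k,
          (S.powerset.image (fun S₁ => (S \ S₁, S₁))).card := card_biUnion_le
      _ ≤ ∑ _S ∈ (univ : Finset (Fin n)).powersetCard k, 2^k := by
          apply sum_le_sum
          intro S hS
          rw [mem_powersetCard_univ] at hS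
          calc (S.powerset.image (fun S₁ => (S \ S₁, S₁))).card ≤ S.powerset.card :=
                card_image_le
            _ = 2^k := by rw [card_powerset, hS]
      _ = ((univ : Finset (Fin n)).powersetCard k).card * 2^k := by
          rw [sum_const, smul_eq_mul]
      _ ≤ n^k * 2^k := by
          apply Nat.mul_le_mul_right
          rw [card_powersetCard, card_univ, Fintype.card_fin]
          exact Nat.choose_le_pow _ _
  have hPextract : ∀ p ∈ P, Disjoint p.1 p.2 ∧ p.1.card + p.2.card = k := by
    intro p hp
    rw [hP_def, mem_biUnion] at hp
    obtain ⟨S, hS, hp2⟩ := hp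
    rw [mem_image] at hp2
    obtain ⟨S₁, hS₁, rfl⟩ := hp2
    rw [mem_powersetCard_univ] at hS
    rw [mem_powerset] at hS₁
    refine ⟨sdiff_disjoint, ?_⟩
    simp only
    rw [card_sdiff_of_subset hS₁, hS]
    have := card_le_card hS₁
    rw [hS] at this
    omega
  have key : ∀ p ∈ P, q * N ≤
      ((((univ : Finset (Fin n)).powersetCard t).filter (GoodPair p)).card : ℝ) := by
    intro p hp
    obtain ⟨hd, hcard⟩ := hPextract p hp
    have := aux_key α hα0 hα1 k n t hk1R hk10R hαk1 hn4 ht1 ht2 hkt htkn p.1 p.2 hd hcard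
    rw [hq_def, hN_def]
    convert this using 3
  set m := ⌈((k:ℝ)*(L+1)+1)/q⌉₊ with hm_def
  have hL0 : (0:ℝ) < L := by linarith
  have hx0 : (0:ℝ) < (k:ℝ)*(L+1)+1 := by positivity
  have hqm : (k:ℝ)*(L+1)+1 ≤ q * m := by
    have h1 : ((k:ℝ)*(L+1)+1)/q ≤ m := Nat.le_ceil _
    rw [div_le_iff₀ hq0] at h1
    linarith
  have hsum : ∑ p ∈ P, ((((univ : Finset (Fin n)).powersetCard t).filter
      fun R => ¬ GoodPair p R).card) ^ m < N ^ m := by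
    apply aux_union q N m hN0 (by linarith)
    · intro p hp
      have hsplit := card_filter_add_card_filter_not
        (s := (univ : Finset (Fin n)).powersetCard t) (p := GoodPair p)
      rw [hTcard] at hsplit
      have hgood := key p hp
      have hgle : (((univ : Finset (Fin n)).powersetCard t).filter (GoodPair p)).card ≤ N := by
        omega
      have heq : ((((univ : Finset (Fin n)).powersetCard t).filter
          fun R => ¬ GoodPair p R).card : ℝ)
          = (N:ℝ) - (((univ : Finset (Fin n)).powersetCard t).filter (GoodPair p)).card := by
        have h2 : (((univ : Finset (Fin n)).powersetCard t).filter
            fun R => ¬ GoodPair p R).card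
            = N - (((univ : Finset (Fin n)).powersetCard t).filter (GoodPair p)).card := by
          omega
        rw [h2, Nat.cast_sub hgle]
      rw [heq]
      nlinarith [hgood, hN0R]
    · -- (P.card) * (1-q)^m < 1
      have hP2 : (P.card : ℝ) ≤ (n:ℝ)^k * 2^k := by exact_mod_cast hPcard
      have h1q0 : (0:ℝ) ≤ 1 - q := by linarith
      have hpow : ((1:ℝ) - q)^m ≤ (2:ℝ) ^ (-(q * m)) := by
        have ha : (1:ℝ) - q ≤ (2:ℝ) ^ (-q) := by
          have h1 : (1:ℝ) - q ≤ Real.exp (-q) := by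
            have := Real.add_one_le_exp (-q)
            linarith
          have h2 : Real.exp (-q) ≤ (2:ℝ) ^ (-q) := by
            rw [Real.rpow_def_of_pos (by norm_num : (0:ℝ) < 2)]
            apply Real.exp_le_exp.2
            nlinarith [Real.log_two_lt_d9, Real.log_two_gt_d9, hq0, hq1]
          linarith
        calc ((1:ℝ) - q)^m ≤ ((2:ℝ)^(-q))^m := pow_le_pow_left₀ h1q0 ha m
          _ = (2:ℝ) ^ (-(q*m)) := by
              rw [← Real.rpow_natCast ((2:ℝ)^(-q)) m, ← Real.rpow_mul (by norm_num)]
              congr 1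
              ring
      have hnk : (n:ℝ)^k = (2:ℝ) ^ (L * k) := by
        rw [hL_def, ← Real.rpow_logb (by norm_num : (0:ℝ) < 2) (by norm_num) hn0]
        rw [← Real.rpow_natCast ((2:ℝ) ^ Real.logb 2 (n:ℝ)) k, ← Real.rpow_mul (by norm_num)]
        rw [Real.rpow_logb (by norm_num : (0:ℝ) < 2) (by norm_num) hn0]
      have h2k : (2:ℝ)^k = (2:ℝ) ^ ((k:ℝ)) := (Real.rpow_natCast 2 k).symm
      calc (P.card : ℝ) * (1-q)^m ≤ ((n:ℝ)^k * 2^k) * (2:ℝ)^(-(q*m)) := by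
            apply mul_le_mul hP2 hpow (by positivity) (by positivity)
        _ = (2:ℝ) ^ (L * k + (k:ℝ) + -(q * m)) := by
            rw [hnk, h2k, ← Real.rpow_add (by norm_num), ← Real.rpow_add (by norm_num)]
        _ < (2:ℝ) ^ (0:ℝ) := by
            apply Real.rpow_lt_rpow_of_exponent_lt (by norm_num)
            nlinarith [hqm]
        _ = 1 := Real.rpow_zero 2
  obtain ⟨g, hgT, hgcov⟩ := aux_exists m ((univ : Finset (Fin n)).powersetCard t) P GoodPair
    (by rw [hTcard]; exact hsum)
  refine ⟨(univ : Finset (Fin m)).image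
    (fun i => fun x => if x ∈ g i then (1 : Fin 2) else 0), ⟨?_, ?_⟩, ?_⟩
  · intro f hf
    rw [mem_image] at hf
    obtain ⟨i, _, rfl⟩ := hf
    have hfil : (univ.filter fun x => (if x ∈ g i then (1 : Fin 2) else 0) = 1) = g i := by
      ext x
      simp only [mem_filter, mem_univ, true_and]
      by_cases hx : x ∈ g i <;> simp [hx]
    rw [hfil]
    have := hgT i
    rwa [mem_powersetCard_univ] at this
  · intro S₀ S₁ hd hcard
    obtain ⟨i, hi⟩ := hgcov (S₀, S₁) (hPmem S₀ S₁ hd hcard)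
    obtain ⟨hsub, hdisj⟩ := hi
    refine ⟨fun x => if x ∈ g i then (1 : Fin 2) else 0, ?_, ?_, ?_⟩
    · rw [mem_image]
      exact ⟨i, mem_univ i, rfl⟩
    · intro x hx
      simp only
      rw [if_neg (disjoint_left.1 hdisj hx)]
    · intro x hx
      simp only
      rw [if_pos (hsub hx)]
  · have hFm : (((univ : Finset (Fin m)).image
        (fun i => fun x => if x ∈ g i then (1 : Fin 2) else 0)).card : ℝ) ≤ m := by
      have h1 : ((univ : Finset (Fin m)).image
          (fun i => fun x => if x ∈ g i then (1 : Fin 2) else 0)).card ≤ m :=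
        le_trans card_image_le (by rw [card_univ, Fintype.card_fin])
      exact_mod_cast h1
    have hm_up : (m:ℝ) ≤ ((k:ℝ)*(L+1)+1)/q + 1 :=
      le_of_lt (Nat.ceil_lt_add_one (by positivity))
    have hαk0 : (0:ℝ) < α^k := by positivity
    have hx2 : (k:ℝ)*(L+1)+1 ≤ 2*k*L := by nlinarith [hL2, hk1R]
    have hdivq : ((k:ℝ)*(L+1)+1)/q ≤ 4*k*L/α^k := by
      rw [hq_def]
      rw [div_le_div_iff₀ (by positivity) hαk0]
      calc ((k:ℝ)*(L+1)+1) * α^k ≤ (2*k*L) * α^k :=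
            mul_le_mul_of_nonneg_right hx2 hαk0.le
        _ = (4*k*L) * (α^k/2) := by ring
        _ ≤ (4*k*L) * (α^k/2) := le_refl _
    have h1small : (1:ℝ) ≤ (k:ℝ)*L/α^k := by
      rw [le_div_iff₀ hαk0]
      nlinarith [hL2, hk1R, hαk_le]
    have hm5 : (m:ℝ) ≤ 5*k*L/α^k := by
      have hsplit : 4*(k:ℝ)*L/α^k + k*L/α^k = 5*k*L/α^k := by ring
      linarith [hm_up, hdivq, h1small]
    have hexp : (5:ℝ)*k ≤ (k:ℝ) ^ ((3:ℝ) * (k:ℝ) ^ ((5:ℝ)/6)) := by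
      have ha : 5*(k:ℝ) ≤ (k:ℝ)^2 := by
        nlinarith [mul_nonneg hk0R.le (show (0:ℝ) ≤ (k:ℝ)-5 by linarith)]
      have hb : (k:ℝ)^2 ≤ (k:ℝ)^3 := pow_le_pow_right₀ hk1R (by norm_num)
      have h5 : (k:ℝ)^((3:ℝ)) ≤ (k:ℝ) ^ ((3:ℝ) * (k:ℝ) ^ ((5:ℝ)/6)) := by
        apply Real.rpow_le_rpow_of_exponent_le hk1R
        have h6 : (1:ℝ) ≤ (k:ℝ) ^ ((5:ℝ)/6) := Real.one_le_rpow hk1R (by norm_num)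
        nlinarith [h6]
      have h43 : (k:ℝ)^((3:ℝ)) = (k:ℝ)^(3:ℕ) := by
        rw [← Real.rpow_natCast (k:ℝ) 3]
        norm_num
      rw [h43] at h5
      calc (5:ℝ)*k ≤ (k:ℝ)^2 := ha
        _ ≤ (k:ℝ)^3 := hb
        _ ≤ (k:ℝ) ^ ((3:ℝ) * (k:ℝ) ^ ((5:ℝ)/6)) := h5
    have hfinal : 5*(k:ℝ)*L/α^k ≤ (1/α)^k * (k:ℝ) ^ ((3:ℝ) * (k:ℝ) ^ ((5:ℝ)/6)) * L := by
      have hinv : ((1:ℝ)/α)^k = 1/α^k := by rw [div_pow, one_pow]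
      rw [hinv]
      calc 5*(k:ℝ)*L/α^k = (1/α^k) * (5*k) * L := by ring
        _ ≤ (1/α^k) * ((k:ℝ) ^ ((3:ℝ) * (k:ℝ) ^ ((5:ℝ)/6))) * L := by
            apply mul_le_mul_of_nonneg_right _ (le_of_lt hL0)
            exact mul_le_mul_of_nonneg_left hexp (by positivity)
    calc (((univ : Finset (Fin m)).image
          (fun i => fun x => if x ∈ g i then (1 : Fin 2) else 0)).card : ℝ)
        ≤ m := hFm
      _ ≤ 5*k*L/α^k := hm5
      _ ≤ (1/α)^k * (k:ℝ) ^ ((3:ℝ) * (k:ℝ) ^ ((5:ℝ)/6)) * L := hfinal
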